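/- Let μ_n be Borel probability measures on ℓ² converging weakly to μ, and suppose for every bounded Lipschitz φ : ℓ² → ℝ, every t ≥ 0, and every n, ∫ φ(P_t^{(n)} δ_x) dμ_n(x) = ∫ φ dμ_n where P_t^{(n)} are Markov transition semigroups (μ_n is P^{(n)}-invariant). If for every t ≥ 0 and bounded Lipschitz φ, sup_x |E[φ(u^{(n)}(t,x))] - φ(S(t)x)| → 0 where S(t) is a continuous deterministic semigroup on ℓ², then μ is invariant under S: ∫ φ(S(t)x) dμ(x) = ∫ φ dμ for all t ≥ 0 and all bounded continuous φ. -/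

import Mathlib

open MeasureTheory Filter
noncomputable section

/-- ℓ² space of square-summable real sequences indexed by ℤ^N. -/
abbrev ellTwo (N : ℕ) := lp (fun _ : Fin N → ℤ => ℝ) 2

instance (N : ℕ) : MeasurableSpace (ellTwo N) := borel _
instance (N : ℕ) : BorelSpace (ellTwo N) := ⟨rfl⟩

open Metric in

-- auxiliary: finite Borel measures on a metric space agreeing on bounded Lipschitz functions are equal
theorem aux_ext_lipschitz {X : Type*} [MetricSpace X] [MeasurableSpace X] [BorelSpace X]
    (μ ν : Measure X) [IsFiniteMeasure μ] [IsFiniteMeasure ν]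
    (h : ∀ ψ : X → ℝ, (∃ C : NNReal, LipschitzWith C ψ) → (∃ M, ∀ x, |ψ x| ≤ M) →
      ∫ x, ψ x ∂μ = ∫ x, ψ x ∂ν) : μ = ν := by
  have key : ∀ F : Set X, IsClosed F → μ F = ν F := by
    intro F hF
    rcases F.eq_empty_or_nonempty with rfl | hFne
    · simp
    set f : ℕ → X → ℝ := fun k x => max (1 - (k : ℝ) * infDist x F) 0 with hf
    have hlip : ∀ k : ℕ, LipschitzWith k (f k) := by
      intro k
      have : LipschitzWith k (fun x => 1 - (k : ℝ) * infDist x F) := by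
        apply LipschitzWith.of_dist_le_mul
        intro x y
        have h1 := (lipschitz_infDist_pt F).dist_le_mul x y
        rw [NNReal.coe_one, one_mul, Real.dist_eq] at h1
        rw [Real.dist_eq]
        have heq : (1 - (k:ℝ) * infDist x F) - (1 - (k:ℝ) * infDist y F)
            = (k:ℝ) * (infDist y F - infDist x F) := by ring
        rw [heq, abs_mul, abs_of_nonneg (k.cast_nonneg : (0:ℝ) ≤ (k:ℝ))]
        have hcast : (((k:NNReal)):ℝ) = (k:ℝ) := by norm_cast
        rw [hcast]
        have h1' : |infDist y F - infDist x F| ≤ dist x y := by rwa [abs_sub_comm]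
        exact mul_le_mul_of_nonneg_left h1' k.cast_nonneg
      exact this.max_const 0
    have hbdd : ∀ k x, |f k x| ≤ 1 := by
      intro k x
      rw [abs_le]
      constructor
      · have : (0:ℝ) ≤ f k x := le_max_right _ _
        linarith
      · apply max_le _ zero_le_one
        have : 0 ≤ (k:ℝ) * infDist x F := mul_nonneg k.cast_nonneg infDist_nonneg
        linarith
    have hlim : ∀ x, Tendsto (fun k => f k x) atTop (nhds (F.indicator (fun _ => (1:ℝ)) x)) := by
      intro x
      by_cases hx : x ∈ F
      · have : ∀ k, f k x = 1 := by
          intro k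
          have : infDist x F = 0 := infDist_zero_of_mem hx
          simp [hf, this]
        simp only [Set.indicator_of_mem hx]
        simp [this]
      · have hpos : 0 < infDist x F := (hF.notMem_iff_infDist_pos hFne).mp hx
        simp only [Set.indicator_of_notMem hx]
        have : ∀ᶠ k : ℕ in atTop, f k x = 0 := by
          filter_upwards [eventually_ge_atTop (Nat.ceil (1 / infDist x F))] with k hk
          have h1 : 1 / infDist x F ≤ (k:ℝ) := le_trans (Nat.le_ceil _) (by exact_mod_cast hk)
          have : 1 ≤ (k:ℝ) * infDist x F := by
            rw [div_le_iff₀ hpos] at h1; linarith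
          simp [hf, max_eq_right]; linarith
        exact Tendsto.congr' (this.mono fun k hk => hk.symm) tendsto_const_nhds
    have hFm : MeasurableSet F := hF.measurableSet
    have hconv : ∀ (m : Measure X) [IsFiniteMeasure m],
        Tendsto (fun k => ∫ x, f k x ∂m) atTop (nhds ((m F).toReal)) := by
      intro m _
      have := tendsto_integral_of_dominated_convergence (μ := m)
        (F := f) (f := F.indicator (fun _ => (1:ℝ))) (fun _ => 1)
        (fun k => ((hlip k).continuous).aestronglyMeasurable)
        (integrable_const 1)
        (fun k => ae_of_all _ fun x => by simpa using hbdd k x)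
        (ae_of_all _ hlim)
      rw [show ∫ x, F.indicator (fun _ => (1:ℝ)) x ∂m = (m F).toReal by
        rw [integral_indicator_const (1:ℝ) hFm]; simp; rfl] at this
      exact this
    have heq : ∀ k, ∫ x, f k x ∂μ = ∫ x, f k x ∂ν :=
      fun k => h (f k) ⟨k, hlip k⟩ ⟨1, hbdd k⟩
    have h1 := hconv μ
    have h2 := hconv ν
    rw [funext heq] at h1
    have := tendsto_nhds_unique h1 h2
    exact (ENNReal.toReal_eq_toReal_iff' (measure_ne_top μ F) (measure_ne_top ν F)).mp this
  refine ext_of_generate_finite _ (BorelSpace.measurable_eq.trans borel_eq_generateFrom_isClosed)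
    isPiSystem_isClosed (fun s hs => key s hs) (key _ isClosed_univ)

/-- If Borel probability measures `μ_n` on ℓ² converge weakly to `μ`, each
`μ_n` is invariant for a Markov semigroup `P^{(n)}` (tested against bounded Lipschitz
functions), and `P_t^{(n)} φ` converges to `φ ∘ S(t)` uniformly in the initial point for
a continuous deterministic semigroup `S`, then `μ` is invariant under `S`:
`∫ φ(S(t)x) dμ = ∫ φ dμ` for all `t ≥ 0` and all bounded continuous `φ`. -/
theorem limit_of_invariant_measures_is_invariant (N : ℕ)
    (μn : ℕ → Measure (ellTwo N)) (μ : Measure (ellTwo N))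
    (hprobn : ∀ n, IsProbabilityMeasure (μn n)) (hprob : IsProbabilityMeasure μ)
    (hweak : ∀ φ : ellTwo N → ℝ, Continuous φ → (∃ M, ∀ x, |φ x| ≤ M) →
      Tendsto (fun n => ∫ x, φ x ∂(μn n)) atTop (nhds (∫ x, φ x ∂μ)))
    (P : ℕ → ℝ → (ellTwo N → ℝ) → (ellTwo N → ℝ))
    (hinv : ∀ (n : ℕ) (t : ℝ), 0 ≤ t → ∀ φ : ellTwo N → ℝ,
      (∃ C : NNReal, LipschitzWith C φ) → (∃ M, ∀ x, |φ x| ≤ M) →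
      ∫ x, P n t φ x ∂(μn n) = ∫ x, φ x ∂(μn n))
    (S : ℝ → ellTwo N → ellTwo N)
    (hS : ∀ t : ℝ, 0 ≤ t → Continuous (S t))
    (hconv : ∀ (t : ℝ), 0 ≤ t → ∀ φ : ellTwo N → ℝ,
      (∃ C : NNReal, LipschitzWith C φ) → (∃ M, ∀ x, |φ x| ≤ M) →
      ∀ ε : ℝ, 0 < ε → ∃ n₀ : ℕ, ∀ n ≥ n₀, ∀ x, |P n t φ x - φ (S t x)| ≤ ε) :
    ∀ t : ℝ, 0 ≤ t → ∀ φ : ellTwo N → ℝ, Continuous φ → (∃ M, ∀ x, |φ x| ≤ M) →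
      ∫ x, φ (S t x) ∂μ = ∫ x, φ x ∂μ := by
  intro t ht φ hφc hφbdd
  -- Step A: invariance for bounded Lipschitz test functions
  have hA : ∀ ψ : ellTwo N → ℝ, (∃ C : NNReal, LipschitzWith C ψ) → (∃ M, ∀ x, |ψ x| ≤ M) →
      ∫ x, ψ (S t x) ∂μ = ∫ x, ψ x ∂μ := by
    rintro ψ ⟨C, hC⟩ ⟨M, hM⟩
    have hψc : Continuous ψ := hC.continuous
    have hcomp : Continuous fun x => ψ (S t x) := hψc.comp (hS t ht)
    have h1 : Tendsto (fun n => ∫ x, ψ (S t x) ∂(μn n)) atTop (nhds (∫ x, ψ (S t x) ∂μ)) :=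
      hweak _ hcomp ⟨M, fun x => hM _⟩
    have h2 : Tendsto (fun n => ∫ x, ψ x ∂(μn n)) atTop (nhds (∫ x, ψ x ∂μ)) :=
      hweak _ hψc ⟨M, hM⟩
    -- the shifted test function ψ + 1
    have hC1 : LipschitzWith C (fun x => ψ x + 1) := by
      apply LipschitzWith.of_dist_le_mul
      intro x y
      rw [Real.dist_eq, add_sub_add_right_eq_sub, ← Real.dist_eq]
      exact hC.dist_le_mul x y
    have hM1 : ∀ x, |ψ x + 1| ≤ M + 1 := fun x =>
      (abs_add_le _ _).trans (by simpa using add_le_add_right (hM x) 1)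
    have hbound : ∀ ε : ℝ, 0 < ε → ∀ᶠ n in atTop,
        |(∫ x, ψ (S t x) ∂(μn n)) - ∫ x, ψ x ∂(μn n)| ≤ ε := by
      intro ε hε
      obtain ⟨n₁, hn₁⟩ := hconv t ht ψ ⟨C, hC⟩ ⟨M, hM⟩ ε hε
      obtain ⟨n₂, hn₂⟩ := hconv t ht (fun x => ψ x + 1) ⟨C, hC1⟩ ⟨M + 1, hM1⟩ ε hε
      filter_upwards [eventually_ge_atTop n₁, eventually_ge_atTop n₂] with n hna hnb
      haveI := hprobn n
      have hIntOf : ∀ (χ : ellTwo N → ℝ) (M' : ℝ), Continuous χ → (∀ x, |χ x| ≤ M') →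
          Integrable χ (μn n) := by
        intro χ M' hc hb
        exact Integrable.mono' (integrable_const M') hc.aestronglyMeasurable
          (ae_of_all _ fun x => by simpa [Real.norm_eq_abs] using hb x)
      have hintS : Integrable (fun x => ψ (S t x)) (μn n) := hIntOf _ M hcomp (fun x => hM _)
      have hintψ : Integrable ψ (μn n) := hIntOf _ M hψc hM
      have hintS1 : Integrable (fun x => ψ (S t x) + 1) (μn n) :=
        hIntOf _ (M + 1) (hcomp.add continuous_const) (fun x => hM1 (S t x))
      -- generic estimate assuming integrability of P n t χ
      have key : ∀ χ : ellTwo N → ℝ, (∀ x, |P n t χ x - χ (S t x)| ≤ ε) →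
          Integrable (fun x => χ (S t x)) (μn n) → Integrable (P n t χ) (μn n) →
          |(∫ x, χ (S t x) ∂(μn n)) - ∫ x, P n t χ x ∂(μn n)| ≤ ε := by
        intro χ hχ hi1 hi2
        rw [← integral_sub hi1 hi2]
        have hb : ∀ᵐ x ∂(μn n), ‖χ (S t x) - P n t χ x‖ ≤ ε :=
          ae_of_all _ fun x => by
            rw [Real.norm_eq_abs, abs_sub_comm]; exact hχ x
        have := norm_integral_le_of_norm_le_const hb
          (f := fun x => χ (S t x) - P n t χ x) (μ := μn n)
        simpa [Real.norm_eq_abs, measure_univ] using this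
      by_cases hP : Integrable (P n t ψ) (μn n)
      · have e1 := hinv n t ht ψ ⟨C, hC⟩ ⟨M, hM⟩
        rw [← e1]
        exact key ψ (hn₁ n hna) hintS hP
      · have ha0 : ∫ x, ψ x ∂(μn n) = 0 := by
          rw [← hinv n t ht ψ ⟨C, hC⟩ ⟨M, hM⟩, integral_undef hP]
        by_cases hP1 : Integrable (P n t (fun x => ψ x + 1)) (μn n)
        · have e1 := hinv n t ht (fun x => ψ x + 1) ⟨C, hC1⟩ ⟨M + 1, hM1⟩
          have h3 := key (fun x => ψ x + 1) (hn₂ n hnb) hintS1 hP1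
          rw [e1, integral_add hintS (integrable_const 1), integral_add hintψ (integrable_const 1)]
            at h3
          simpa using h3
        · have := hinv n t ht (fun x => ψ x + 1) ⟨C, hC1⟩ ⟨M + 1, hM1⟩
          rw [integral_undef hP1, integral_add hintψ (integrable_const 1), integral_const,
            probReal_univ, ha0] at this
          norm_num at this
    have h3 : Tendsto (fun n => (∫ x, ψ (S t x) ∂(μn n)) - ∫ x, ψ x ∂(μn n)) atTop (nhds 0) := by
      rw [NormedAddCommGroup.tendsto_nhds_zero]
      intro ε hε
      filter_upwards [hbound (ε / 2) (by linarith)] with n hn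
      rw [Real.norm_eq_abs]
      linarith
    have h4 : Tendsto (fun n => ∫ x, ψ (S t x) ∂(μn n)) atTop (nhds (∫ x, ψ x ∂μ)) := by
      have := h3.add h2
      rw [zero_add] at this
      refine this.congr fun n => ?_
      ring
    exact tendsto_nhds_unique h1 h4
  -- Step B: conclude the pushforward measure equals μ, then test against φ
  have hSm : Measurable (S t) := (hS t ht).measurable
  haveI : IsProbabilityMeasure (μ.map (S t)) := Measure.isProbabilityMeasure_map hSm.aemeasurable
  have hmap : μ.map (S t) = μ := by
    apply aux_ext_lipschitz
    rintro ψ ⟨C, hC⟩ hb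
    rw [integral_map hSm.aemeasurable hC.continuous.aestronglyMeasurable]
    exact hA ψ ⟨C, hC⟩ hb
  rw [← integral_map hSm.aemeasurable hφc.aestronglyMeasurable, hmap]
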